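/- Mononen–Myllymäki formula for the multinomial regret: for all integers L ≥ 1 and n ≥ 1, R(L, n) = ∑_{k=0}^{n} (n)_k · (L−1)^{(k)} / (n^k · k!), where (n)_k = n(n−1)⋯(n−k+1) is the falling factorial and (L−1)^{(k)} = (L−1)L(L+1)⋯(L+k−2) is the rising factorial (both equal to 1 for k = 0). -/

import Mathlib

open Finset Polynomial fwdDiff

lemma fwdDiff_iter_zero {M G : Type*} [AddCommMonoid M] [AddCommGroup G] (h : M) (n : ℕ) :
    (Δ_[h])^[n] (0 : M → G) = 0 := by
  induction n with
  | zero => rfl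
  | succ n ih =>
    rw [Function.iterate_succ_apply, show Δ_[h] (0 : M → G) = 0 by funext t; simp [fwdDiff], ih]

lemma fwdDiff_poly_iter_eq_zero : ∀ (n : ℕ) (P : Polynomial ℝ), P.natDegree < n →
    (Δ_[(1:ℝ)])^[n] (fun t => P.eval t) = 0
  | 0, P, h => absurd h (Nat.not_lt_zero _)
  | (n+1), P, h => by
    have hQ : Δ_[(1:ℝ)] (fun t => P.eval t) = fun t => (P.comp (X + C 1) - P).eval t := by
      funext t; simp [fwdDiff, eval_comp]
    rw [Function.iterate_succ_apply, hQ]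
    set Q := P.comp (X + C 1) - P with hQdef
    by_cases h0 : Q = 0
    · rw [h0]
      simp only [eval_zero]
      exact fwdDiff_iter_zero (1:ℝ) n (G := ℝ)
    · apply fwdDiff_poly_iter_eq_zero n Q
      have hP0 : P ≠ 0 := by
        rintro rfl; simp [hQdef] at h0
      have hdeg : P.natDegree ≠ 0 := by
        intro hd
        obtain ⟨a, ha⟩ := Polynomial.natDegree_eq_zero.mp hd
        rw [hQdef, ← ha] at h0
        simp at h0
      have hcomp : (P.comp (X + C 1)).natDegree = P.natDegree := by
        rw [natDegree_comp, natDegree_X_add_C, mul_one]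
      have hlc : (P.comp (X + C 1)).leadingCoeff = P.leadingCoeff := by
        rw [leadingCoeff_comp (by rw [natDegree_X_add_C]; norm_num),
          leadingCoeff_X_add_C, one_pow, mul_one]
      have hcomp0 : P.comp (X + C 1) ≠ 0 := by
        intro hz
        apply hP0
        rwa [← leadingCoeff_eq_zero, ← hlc, leadingCoeff_eq_zero]
      have hdegeq : (P.comp (X + C 1)).degree = P.degree := by
        rw [degree_eq_natDegree hcomp0, degree_eq_natDegree hP0, hcomp]
      have hdlt : Q.degree < P.degree := by
        rw [hQdef, ← hdegeq]
        exact Polynomial.degree_sub_lt hdegeq hcomp0 hlc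
      have : Q.natDegree < P.natDegree := natDegree_lt_natDegree h0 hdlt
      omega

lemma poly_ext_of_derivative {P Q : Polynomial ℝ} (h : derivative P = derivative Q)
    (a : ℝ) (he : P.eval a = Q.eval a) : P = Q := by
  have h0 : derivative (P - Q) = 0 := by rw [derivative_sub, h, sub_self]
  have hd : (P - Q).natDegree = 0 := natDegree_eq_zero_of_derivative_eq_zero h0
  obtain ⟨c, hc⟩ := Polynomial.natDegree_eq_zero.mp hd
  have h1 : (0:ℝ) = c := by
    have := congrArg (Polynomial.eval a) hc.symm
    simpa [he] using this
  have : P - Q = 0 := by rw [← hc, ← h1]; simp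
  exact sub_eq_zero.mp this

lemma altsum_eval (n : ℕ) (x : ℝ) :
    ∑ k ∈ range (n+2), ((-1:ℝ))^(n+1-k) * ((n+1).choose k : ℝ) * (x + k)^n = 0 := by
  have hdeg : ((X + C x)^n : Polynomial ℝ).natDegree < n+1 := by
    rw [natDegree_pow, natDegree_X_add_C, mul_one]; omega
  have h := fwdDiff_poly_iter_eq_zero (n+1) ((X + C x)^n) hdeg
  have h2 := fwdDiff_iter_eq_sum_shift (1:ℝ) (fun t => (((X + C x)^n : Polynomial ℝ)).eval t) (n+1) 0
  rw [h] at h2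
  calc ∑ k ∈ range (n+2), ((-1:ℝ))^(n+1-k) * ((n+1).choose k : ℝ) * (x + k)^n
      = ∑ k ∈ range (n+1+1), ((-1 : ℤ) ^ (n+1-k) * (n+1).choose k) •
          (((X + C x)^n : Polynomial ℝ)).eval (0 + k • (1:ℝ)) := by
        refine Finset.sum_congr rfl fun k _ => ?_
        rw [zsmul_eq_mul, eval_pow, eval_add, eval_X, eval_C]
        push_cast
        ring_nf
    _ = (0 : ℝ → ℝ) 0 := h2.symm
    _ = 0 := rfl

def hq (x : ℝ) : ℕ → ℝ
  | 0 => 1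
  | (k+1) => x * (x + (k+1))^k

lemma hurwitz (x : ℝ) : ∀ n : ℕ, ∀ y : ℝ,
    ∑ k ∈ range (n+1), (n.choose k : ℝ) * hq x k * (y + ((n-k : ℕ) : ℝ))^(n-k)
      = (x + y + n)^n := by
  intro n
  induction n with
  | zero => intro y; simp [hq]
  | succ n ih =>
    have hP1 : (∑ k ∈ range (n+1), C ((n.choose k : ℝ) * hq x k) *
          (X + C (((n-k : ℕ) : ℝ)+1))^(n-k)) = (X + C (x + ((n:ℝ) + 1)))^n := by
      apply Polynomial.funext
      intro t
      rw [eval_finset_sum]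
      simp only [eval_mul, eval_pow, eval_add, eval_X, eval_C]
      calc ∑ k ∈ range (n+1), (n.choose k : ℝ) * hq x k * (t + (((n-k:ℕ):ℝ)+1))^(n-k)
          = ∑ k ∈ range (n+1), (n.choose k : ℝ) * hq x k * ((t+1) + ((n-k:ℕ):ℝ))^(n-k) := by
            refine sum_congr rfl fun k _ => ?_
            ring_nf
        _ = (x + (t+1) + n)^n := ih (t+1)
        _ = (t + (x + ((n:ℝ) + 1)))^n := by ring_nf
    have key : (∑ k ∈ range (n+2), C (((n+1).choose k : ℝ) * hq x k) *
          (X + C (((n+1-k : ℕ) : ℝ)))^(n+1-k)) = (X + C (x + (n+1)))^(n+1) := by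
      apply poly_ext_of_derivative (a := -(x + ((n:ℝ)+1)))
      · rw [derivative_sum, derivative_pow, derivative_X_add_C, mul_one]
        have hderk : ∀ k ∈ range (n+2),
            derivative (C (((n+1).choose k : ℝ) * hq x k) * (X + C (((n+1-k : ℕ) : ℝ)))^(n+1-k))
            = C (((n+1).choose k : ℝ) * hq x k) *
                (C (((n+1-k : ℕ):ℝ)) * (X + C (((n+1-k : ℕ) : ℝ)))^(n+1-k-1)) := by
          intro k _
          rw [derivative_C_mul, derivative_pow, derivative_X_add_C, mul_one]
        rw [Finset.sum_congr rfl hderk, Finset.sum_range_succ]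
        have hlast : C (((n+1).choose (n+1) : ℝ) * hq x (n+1)) *
            (C (((n+1-(n+1) : ℕ):ℝ)) * (X + C (((n+1-(n+1) : ℕ) : ℝ)))^(n+1-(n+1)-1)) = 0 := by
          simp
        rw [hlast, add_zero, Nat.add_sub_cancel, ← hP1, Finset.mul_sum]
        refine Finset.sum_congr rfl fun k hk => ?_
        rw [Finset.mem_range] at hk
        have hk' : k ≤ n := by omega
        have e1 : n+1-k = (n-k)+1 := by omega
        have e2 : n+1-k-1 = n-k := by omega
        rw [e2, e1]
        push_cast [Nat.succ_sub hk']
        rw [← mul_assoc, ← mul_assoc, ← C_mul, ← C_mul]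
        congr 1
        have hsc : ((n.choose k : ℝ)) * ((n:ℝ)+1) = ((n+1).choose k : ℝ) * (((n-k:ℕ):ℝ)+1) := by
          have := Nat.choose_mul_succ_eq n k
          have h2 : ((n.choose k * (n+1) : ℕ) : ℝ) = (((n+1).choose k * (n+1-k) : ℕ) : ℝ) := by
            exact_mod_cast congrArg Nat.cast this
          push_cast [e1] at h2
          push_cast
          linarith
        congr 1
        linear_combination (-(hq x k)) * hsc
      · rw [eval_finset_sum]
        simp only [eval_mul, eval_pow, eval_add, eval_X, eval_C]
        have hz : ((-(x + ((n:ℝ)+1))) + (x + ((n:ℝ)+1)))^(n+1) = 0 := by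
          rw [neg_add_cancel]
          exact zero_pow (by omega)
        push_cast
        rw [hz]
        calc ∑ k ∈ range (n+2), ((n+1).choose k : ℝ) * hq x k *
              ((-(x + ((n:ℝ)+1))) + ((n+1-k : ℕ):ℝ))^(n+1-k)
            = ∑ k ∈ range (n+2), ((-1:ℝ))^(n+1-k) * ((n+1).choose k : ℝ) * (x + k)^n * x := by
              refine Finset.sum_congr rfl fun k hk => ?_
              rw [Finset.mem_range] at hk
              have hk' : k ≤ n+1 := by omega
              have hbase : (-(x + ((n:ℝ)+1))) + ((n+1-k : ℕ):ℝ) = -(x + k) := by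
                rw [Nat.cast_sub hk']
                push_cast
                ring
              rw [hbase, neg_pow]
              cases k with
              | zero => simp [hq, pow_succ]; ring
              | succ j =>
                have e3 : n+1-(j+1) = n-j := by omega
                simp only [hq, e3]
                push_cast
                have e4 : (x + ((j:ℝ)+1))^n = (x + ((j:ℝ)+1))^j * (x + ((j:ℝ)+1))^(n-j) := by
                  rw [← pow_add]
                  congr 1
                  omega
                rw [e4]
                ring
          _ = (∑ k ∈ range (n+2), ((-1:ℝ))^(n+1-k) * ((n+1).choose k : ℝ) * (x + k)^n) * x := by
              rw [Finset.sum_mul]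
          _ = 0 := by rw [altsum_eval]; ring
    intro y
    have := congrArg (Polynomial.eval y) key
    rw [eval_finset_sum] at this
    simp only [eval_mul, eval_pow, eval_add, eval_X, eval_C] at this
    calc ∑ k ∈ range (n+1+1), ((n+1).choose k : ℝ) * hq x k * (y + ((n+1-k : ℕ):ℝ))^(n+1-k)
        = (y + (x + ((n:ℝ)+1)))^(n+1) := by push_cast at this ⊢; exact this
      _ = (x + y + ((n:ℝ)+1))^(n+1) := by ring
      _ = (x + y + ((n+1 : ℕ):ℝ))^(n+1) := by push_cast; ring



lemma F2 : ∀ (n : ℕ) (x : ℝ),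
    ∑ k ∈ range (n+1), (n.choose k : ℝ) * (x + k)^k * (((n-k:ℕ):ℝ))^(n-k)
      = ∑ j ∈ range (n+1), (n.descFactorial j : ℝ) * (x + n)^(n-j) := by
  intro n
  induction n with
  | zero => intro x; simp
  | succ n ih =>
    intro x
    have hsplit : ∑ k ∈ range (n+2), (((n+1).choose k : ℝ)) * (x + k)^k * (((n+1-k:ℕ):ℝ))^(n+1-k)
        = (∑ k ∈ range (n+2), ((n+1).choose k : ℝ) * hq x k * (((n+1-k:ℕ):ℝ))^(n+1-k))
          + ∑ k ∈ range (n+2), ((n+1).choose k : ℝ) * k * (x + k)^(k-1) * (((n+1-k:ℕ):ℝ))^(n+1-k) := by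
      rw [← Finset.sum_add_distrib]
      refine Finset.sum_congr rfl fun k _ => ?_
      cases k with
      | zero => simp [hq]
      | succ j =>
        simp only [hq]
        push_cast
        have : (x + ((j:ℝ)+1))^(j+1) = (x + ((j:ℝ)+1)) * (x + ((j:ℝ)+1))^j := by
          rw [pow_succ]; ring
        rw [this]
        ring
    have hpart1 : (∑ k ∈ range (n+2), ((n+1).choose k : ℝ) * hq x k * (((n+1-k:ℕ):ℝ))^(n+1-k))
        = (x + ((n+1:ℕ):ℝ))^(n+1) := by
      have := hurwitz x (n+1) 0
      calc ∑ k ∈ range (n+2), ((n+1).choose k : ℝ) * hq x k * (((n+1-k:ℕ):ℝ))^(n+1-k)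
          = ∑ k ∈ range (n+2), ((n+1).choose k : ℝ) * hq x k * ((0:ℝ) + ((n+1-k:ℕ):ℝ))^(n+1-k) := by
            refine Finset.sum_congr rfl fun k _ => by rw [zero_add]
        _ = (x + 0 + ((n+1:ℕ):ℝ))^(n+1) := this
        _ = (x + ((n+1:ℕ):ℝ))^(n+1) := by ring_nf
    have hpart2 : (∑ k ∈ range (n+2), ((n+1).choose k : ℝ) * k * (x + k)^(k-1) * (((n+1-k:ℕ):ℝ))^(n+1-k))
        = (((n:ℝ)+1)) * ∑ j ∈ range (n+1), (n.descFactorial j : ℝ) * ((x+1) + n)^(n-j) := by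
      rw [Finset.sum_range_succ']
      simp only [Nat.cast_zero, mul_zero, zero_mul, add_zero]
      rw [← ih (x+1), Finset.mul_sum]
      refine Finset.sum_congr rfl fun j hj => ?_
      have e1 : n+1-(j+1) = n-j := by omega
      have e2 : j+1-1 = j := by omega
      rw [e1, e2]
      have hch : (((n+1).choose (j+1) : ℝ)) * ((j:ℝ)+1) = ((n:ℝ)+1) * (n.choose j : ℝ) := by
        have := Nat.add_one_mul_choose_eq n j
        have h2 : (((n+1) * n.choose j : ℕ) : ℝ) = (((n+1).choose (j+1) * (j+1) : ℕ) : ℝ) :=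
          congrArg Nat.cast this
        push_cast at h2
        linarith
      have hb : (x + ((j+1:ℕ):ℝ)) = ((x+1) + (j:ℝ)) := by push_cast; ring
      rw [hb]
      push_cast
      linear_combination ((x+1) + (j:ℝ))^j * (((n-j:ℕ):ℝ))^(n-j) * hch
    rw [hsplit, hpart1, hpart2]
    have hterm : ∀ j ∈ range (n+1), ((n+1).descFactorial (j+1) : ℝ) * (x + ((n+1:ℕ):ℝ))^(n+1-(j+1))
        = ((n:ℝ)+1) * ((n.descFactorial j : ℝ) * ((x+1) + (n:ℝ))^(n-j)) := by
      intro j hj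
      have e1 : n+1-(j+1) = n-j := by omega
      rw [e1, Nat.succ_descFactorial_succ]
      have hb : (x + ((n+1:ℕ):ℝ)) = ((x+1) + (n:ℝ)) := by push_cast; ring
      rw [hb]
      push_cast
      ring
    conv_rhs => rw [Finset.sum_range_succ']
    rw [Finset.sum_congr rfl hterm, ← Finset.mul_sum]
    simp only [Nat.descFactorial_zero, Nat.cast_one, one_mul, Nat.sub_zero]
    ring

lemma multinomial_univ_cons {k : ℕ} (a : ℕ) (y : Fin k → ℕ) :
    Nat.multinomial (univ : Finset (Fin (k+1))) (Fin.cons a y)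
      = (a + ∑ i, y i).choose a * Nat.multinomial univ y := by
  unfold Nat.multinomial
  rw [Fin.sum_univ_succ, Fin.prod_univ_succ]
  simp only [Fin.cons_zero, Fin.cons_succ]
  have hdvd : (∏ i, (y i).factorial) ∣ (∑ i, y i).factorial :=
    Nat.prod_factorial_dvd_factorial_sum _ _
  set s := ∑ i, y i
  set D := ∏ i, (y i).factorial
  have h1 : (a+s).choose a * a.factorial * s.factorial = (a + s).factorial := by
    rw [Nat.choose_symm_add]
    exact Nat.add_choose_mul_factorial_mul_factorial a s
  rw [← h1]
  have h2 : (a+s).choose a * a.factorial * s.factorial = a.factorial * ((a+s).choose a * s.factorial) := by ring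
  rw [h2, Nat.mul_div_mul_left _ _ (Nat.factorial_pos a), Nat.mul_div_assoc _ hdvd]

lemma sum_antidiagonalTuple_succ {M : Type*} [AddCommMonoid M] {k n : ℕ}
    (f : (Fin (k+1) → ℕ) → M) :
    ∑ x ∈ Finset.Nat.antidiagonalTuple (k+1) n, f x
      = ∑ p ∈ Finset.HasAntidiagonal.antidiagonal n, ∑ y ∈ Finset.Nat.antidiagonalTuple k p.2,
          f (Fin.cons p.1 y) := by
  rw [Finset.sum_sigma']
  refine Finset.sum_nbij'
    (i := fun (x : Fin (k+1) → ℕ) => (⟨(x 0, ∑ i : Fin k, Fin.tail x i), Fin.tail x⟩ :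
      (_ : ℕ × ℕ) × (Fin k → ℕ)))
    (j := fun (s : (_ : ℕ × ℕ) × (Fin k → ℕ)) => Fin.cons s.1.1 s.2) ?_ ?_ ?_ ?_ ?_
  · intro x hx
    rw [Finset.Nat.mem_antidiagonalTuple] at hx
    refine Finset.mem_sigma.mpr ⟨?_, ?_⟩
    · rw [Finset.HasAntidiagonal.mem_antidiagonal]
      rw [← hx, Fin.sum_univ_succ]
      rfl
    · exact Finset.Nat.mem_antidiagonalTuple.mpr rfl
  · intro s hs
    rw [Finset.mem_sigma, Finset.HasAntidiagonal.mem_antidiagonal, Finset.Nat.mem_antidiagonalTuple] at hs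
    rw [Finset.Nat.mem_antidiagonalTuple, Fin.sum_univ_succ]
    simp only [Fin.cons_zero, Fin.cons_succ]
    rw [show ∑ i : Fin k, s.2 i = s.1.2 from hs.2, hs.1]
  · intro x hx
    exact Fin.cons_self_tail x
  · intro s hs
    rw [Finset.mem_sigma, Finset.HasAntidiagonal.mem_antidiagonal, Finset.Nat.mem_antidiagonalTuple] at hs
    refine Sigma.ext ?_ ?_
    · simp only [Fin.cons_zero, Fin.tail_cons]
      rw [show ∑ i : Fin k, s.2 i = s.1.2 from hs.2]
    · simp [Fin.tail_cons]
  · intro x hx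
    rw [Fin.cons_self_tail]

noncomputable def T (L n : ℕ) : ℝ :=
  ∑ h ∈ Finset.Nat.antidiagonalTuple L n,
    (Nat.multinomial Finset.univ h : ℝ) * ∏ v, ((h v : ℝ)) ^ (h v)

lemma T_one (n : ℕ) : T 1 n = (n:ℝ)^n := by
  unfold T
  rw [Finset.Nat.antidiagonalTuple_one, Finset.sum_singleton]
  have h1 : Nat.multinomial (univ : Finset (Fin 1)) ![n] = 1 := by
    rw [show (univ : Finset (Fin 1)) = {0} from rfl]
    exact Nat.multinomial_singleton 0 ![n]
  rw [h1]
  simp [Fin.prod_univ_one]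

lemma T_succ (L n : ℕ) : T (L+1) n
    = ∑ p ∈ Finset.HasAntidiagonal.antidiagonal n, (n.choose p.1 : ℝ) * ((p.1:ℝ))^(p.1) * T L p.2 := by
  unfold T
  rw [sum_antidiagonalTuple_succ]
  refine Finset.sum_congr rfl fun p hp => ?_
  rw [Finset.HasAntidiagonal.mem_antidiagonal] at hp
  rw [Finset.mul_sum]
  refine Finset.sum_congr rfl fun y hy => ?_
  rw [Finset.Nat.mem_antidiagonalTuple] at hy
  rw [multinomial_univ_cons, Fin.prod_univ_succ]
  simp only [Fin.cons_zero, Fin.cons_succ]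
  rw [hy, hp]
  push_cast
  ring

lemma asc_succ_left (M j : ℕ) : M.ascFactorial (j+1) = M * (M+1).ascFactorial j := by
  rw [Nat.ascFactorial_succ]
  exact (Nat.succ_ascFactorial M j).symm

lemma ascsum (M : ℕ) : ∀ j, ∑ i ∈ range (j+1), M.ascFactorial i * j.descFactorial (j-i)
    = (M+1).ascFactorial j
  | 0 => by simp
  | (j+1) => by
    rw [Finset.sum_range_succ]
    have h1 : ∀ i ∈ range (j+1), M.ascFactorial i * (j+1).descFactorial (j+1-i)
        = (j+1) * (M.ascFactorial i * j.descFactorial (j-i)) := by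
      intro i hi
      rw [Finset.mem_range] at hi
      have e : j+1-i = (j-i)+1 := by omega
      rw [e, Nat.succ_descFactorial_succ]
      ring
    rw [Finset.sum_congr rfl h1, ← Finset.mul_sum, ascsum M j, Nat.sub_self,
      Nat.descFactorial_zero, Nat.mul_one, asc_succ_left, Nat.ascFactorial_succ]
    ring

lemma chooseMul {i j n : ℕ} (hij : i ≤ j) (hjn : j ≤ n) :
    n.choose i * (n-i).descFactorial (j-i) = n.choose j * j.descFactorial (j-i) := by
  apply Nat.eq_of_mul_eq_mul_left (show 0 < i.factorial * (n-j).factorial from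
    Nat.mul_pos (Nat.factorial_pos _) (Nat.factorial_pos _))
  have e1 : (n-i) - (j-i) = n-j := by omega
  have e2 : j - (j-i) = i := by omega
  have h3 : i.factorial * j.descFactorial (j-i) = j.factorial := by
    have := Nat.factorial_mul_descFactorial (show j-i ≤ j by omega)
    rwa [e2] at this
  have h4 : n.choose j * j.factorial * (n-j).factorial = n.factorial :=
    Nat.choose_mul_factorial_mul_factorial hjn
  have h5 : (n-j).factorial * (n-i).descFactorial (j-i) = (n-i).factorial := by
    have := Nat.factorial_mul_descFactorial (show j-i ≤ n-i by omega)
    rwa [e1] at this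
  have h6 : (n-i).factorial * n.descFactorial i = n.factorial :=
    Nat.factorial_mul_descFactorial (by omega)
  have h7 : i.factorial * n.choose i = n.descFactorial i := by
    rw [Nat.descFactorial_eq_factorial_mul_choose]
  calc i.factorial * (n-j).factorial * (n.choose i * (n-i).descFactorial (j-i))
      = (i.factorial * n.choose i) * ((n-j).factorial * (n-i).descFactorial (j-i)) := by ring
    _ = n.descFactorial i * (n-i).factorial := by rw [h7, h5]
    _ = n.factorial := by rw [Nat.mul_comm]; exact h6
    _ = n.choose j * j.factorial * (n-j).factorial := h4.symm
    _ = (i.factorial * j.descFactorial (j-i)) * n.choose j * (n-j).factorial := by rw [h3]; ring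
    _ = i.factorial * (n-j).factorial * (n.choose j * j.descFactorial (j-i)) := by ring

lemma diamond {j n : ℕ} (M : ℕ) (hjn : j ≤ n) :
    n.choose j * (M+1).ascFactorial j
      = ∑ i ∈ range (j+1), M.ascFactorial i * (n.choose i * (n-i).descFactorial (j-i)) := by
  have h1 : ∀ i ∈ range (j+1), M.ascFactorial i * (n.choose i * (n-i).descFactorial (j-i))
      = n.choose j * (M.ascFactorial i * j.descFactorial (j-i)) := by
    intro i hi
    rw [Finset.mem_range] at hi
    rw [chooseMul (by omega) hjn]
    ring
  rw [Finset.sum_congr rfl h1, ← Finset.mul_sum, ascsum]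

lemma T_eq (M : ℕ) : ∀ n : ℕ, T (M+1) n
    = ∑ k ∈ range (n+1), (n.choose k : ℝ) * (M.ascFactorial k : ℝ) * (n:ℝ)^(n-k) := by
  induction M with
  | zero =>
    intro n
    rw [T_one]
    rw [Finset.sum_eq_single 0]
    · simp
    · intro k _ hk
      obtain ⟨j, rfl⟩ := Nat.exists_eq_succ_of_ne_zero hk
      rw [Nat.zero_ascFactorial]
      push_cast
      ring
    · intro h
      exact absurd (Finset.mem_range.mpr (by omega)) h
  | succ M ih =>
    intro n
    rw [T_succ]
    calc ∑ p ∈ Finset.HasAntidiagonal.antidiagonal n, (n.choose p.1 : ℝ) * ((p.1:ℝ))^(p.1) * T (M+1) p.2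
        = ∑ a ∈ range (n+1), (n.choose a:ℝ) * ((a:ℝ))^a *
            (∑ k ∈ range ((n-a)+1), ((n-a).choose k:ℝ) * (M.ascFactorial k:ℝ) *
              (((n-a):ℕ):ℝ)^((n-a)-k)) := by
          rw [Finset.Nat.sum_antidiagonal_eq_sum_range_succ_mk]
          exact Finset.sum_congr rfl fun a _ => by rw [ih (n-a)]
      _ = ∑ m ∈ range (n+1), (n.choose m:ℝ) * (((n-m:ℕ)):ℝ)^(n-m) *
            (∑ k ∈ range (m+1), ((m.choose k:ℝ)) * (M.ascFactorial k:ℝ) * ((m:ℕ):ℝ)^(m-k)) := by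
          rw [← Finset.sum_range_reflect]
          refine Finset.sum_congr rfl fun m hm => ?_
          rw [Finset.mem_range] at hm
          have e2 : n+1-1-m = n-m := by omega
          have e3 : n - (n-m) = m := by omega
          rw [e2, e3, Nat.choose_symm (by omega)]
      _ = ∑ m ∈ range (n+1), ∑ k ∈ range (n+1),
            (n.choose m:ℝ) * (((n-m:ℕ)):ℝ)^(n-m) *
              ((m.choose k:ℝ) * (M.ascFactorial k:ℝ) * ((m:ℕ):ℝ)^(m-k)) := by
          refine Finset.sum_congr rfl fun m hm => ?_
          rw [Finset.mem_range] at hm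
          rw [Finset.mul_sum]
          apply Finset.sum_subset (Finset.range_subset_range.mpr (by omega))
          intro k hk hnk
          rw [Finset.mem_range] at hk hnk
          rw [Nat.choose_eq_zero_of_lt (show m < k by omega)]
          push_cast
          ring
      _ = ∑ k ∈ range (n+1), ∑ m ∈ range (n+1),
            (n.choose m:ℝ) * (((n-m:ℕ)):ℝ)^(n-m) *
              ((m.choose k:ℝ) * (M.ascFactorial k:ℝ) * ((m:ℕ):ℝ)^(m-k)) := Finset.sum_comm
      _ = ∑ k ∈ range (n+1), (M.ascFactorial k:ℝ) * ((n.choose k:ℝ) *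
            ∑ q ∈ range ((n-k)+1), (((n-k).descFactorial q):ℝ) * (n:ℝ)^((n-k)-q)) := by
          refine Finset.sum_congr rfl fun k hk => ?_
          rw [Finset.mem_range] at hk
          have hkn : k ≤ n := by omega
          have step1 : ∑ m ∈ range (n+1),
                (n.choose m:ℝ) * (((n-m:ℕ)):ℝ)^(n-m) *
                  ((m.choose k:ℝ) * (M.ascFactorial k:ℝ) * ((m:ℕ):ℝ)^(m-k))
              = ∑ m ∈ Ico k (n+1),
                (n.choose m:ℝ) * (((n-m:ℕ)):ℝ)^(n-m) *
                  ((m.choose k:ℝ) * (M.ascFactorial k:ℝ) * ((m:ℕ):ℝ)^(m-k)) := by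
            rw [eq_comm]
            apply Finset.sum_subset
            · intro m hm
              rw [Finset.mem_Ico] at hm
              exact Finset.mem_range.mpr (by omega)
            · intro m hm hnm
              rw [Finset.mem_range] at hm
              rw [Finset.mem_Ico] at hnm
              rw [Nat.choose_eq_zero_of_lt (show m < k by omega)]
              push_cast
              ring
          rw [step1, Finset.sum_Ico_eq_sum_range]
          have e4 : n + 1 - k = (n-k)+1 := by omega
          rw [e4]
          have step2 : ∀ p ∈ range ((n-k)+1),
              (n.choose (k+p):ℝ) * (((n-(k+p):ℕ)):ℝ)^(n-(k+p)) *
                (((k+p).choose k:ℝ) * (M.ascFactorial k:ℝ) * (((k+p:ℕ)):ℝ)^((k+p)-k))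
              = (M.ascFactorial k:ℝ) * (n.choose k:ℝ) *
                  (((n-k).choose p:ℝ) * (((k:ℕ):ℝ) + (p:ℝ))^p *
                    ((((n-k)-p:ℕ)):ℝ)^((n-k)-p)) := by
            intro p hp
            rw [Finset.mem_range] at hp
            have hcm : n.choose (k+p) * (k+p).choose k = n.choose k * ((n-k).choose p) := by
              have := Nat.choose_mul (n := n) (show k ≤ k+p by omega)
              simpa using this
            have hcast : ((n.choose (k+p) * (k+p).choose k : ℕ):ℝ)
                = ((n.choose k * ((n-k).choose p) : ℕ):ℝ) := by exact_mod_cast congrArg Nat.cast hcm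
            push_cast at hcast
            have e5 : n-(k+p) = (n-k)-p := by omega
            have e6 : (k+p)-k = p := by omega
            rw [e5, e6]
            push_cast
            linear_combination (((n-k)-p:ℕ):ℝ)^((n-k)-p) * ((k:ℝ)+(p:ℝ))^p *
              (M.ascFactorial k:ℝ) * hcast
          rw [Finset.sum_congr rfl step2, ← Finset.mul_sum, mul_assoc]
          congr 1
          congr 1
          have := F2 (n-k) ((k:ℕ):ℝ)
          rw [this]
          refine Finset.sum_congr rfl fun q hq => ?_
          congr 2
          rw [← Nat.cast_add]
          congr 1
          omega
      _ = ∑ j ∈ range (n+1), (n.choose j : ℝ) * ((M+1).ascFactorial j : ℝ) * (n:ℝ)^(n-j) := by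
          rw [eq_comm]
          have hdia : ∀ j ∈ range (n+1),
              (n.choose j : ℝ) * ((M+1).ascFactorial j : ℝ) * (n:ℝ)^(n-j)
              = ∑ i ∈ range (j+1), (M.ascFactorial i:ℝ) *
                  ((n.choose i:ℝ) * ((n-i).descFactorial (j-i):ℝ)) * (n:ℝ)^(n-j) := by
            intro j hj
            rw [Finset.mem_range] at hj
            have := diamond M (show j ≤ n by omega)
            have hc : ((n.choose j * (M+1).ascFactorial j : ℕ):ℝ)
                = ((∑ i ∈ range (j+1), M.ascFactorial i *
                    (n.choose i * (n-i).descFactorial (j-i)) : ℕ):ℝ) := by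
              exact_mod_cast congrArg Nat.cast this
            push_cast at hc
            rw [hc, Finset.sum_mul]
          rw [Finset.sum_congr rfl hdia]
          -- triangle swap
          have tri : ∑ j ∈ range (n+1), ∑ i ∈ range (j+1),
                (M.ascFactorial i:ℝ) * ((n.choose i:ℝ) * ((n-i).descFactorial (j-i):ℝ)) *
                  (n:ℝ)^(n-j)
              = ∑ i ∈ range (n+1), ∑ j ∈ Ico i (n+1),
                (M.ascFactorial i:ℝ) * ((n.choose i:ℝ) * ((n-i).descFactorial (j-i):ℝ)) *
                  (n:ℝ)^(n-j) := by
            simp only [Finset.range_eq_Ico]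
            rw [← Finset.sum_Ico_Ico_comm]
          rw [tri]
          refine Finset.sum_congr rfl fun i hi => ?_
          rw [Finset.mem_range] at hi
          rw [Finset.sum_Ico_eq_sum_range]
          have e7 : n + 1 - i = (n-i)+1 := by omega
          rw [e7, Finset.mul_sum, Finset.mul_sum]
          refine Finset.sum_congr rfl fun q hq => ?_
          rw [Finset.mem_range] at hq
          have e8 : (i+q)-i = q := by omega
          have e9 : n-(i+q) = (n-i)-q := by omega
          rw [e8, e9]
          ring

/-- The multinomial NML regret `R(L, n)`: the sum over all count vectors
`(h_1, …, h_L)` with `h_1 + ⋯ + h_L = n` of the maximum likelihood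
`(n! / (h_1! ⋯ h_L!)) · ∏_v (h_v / n)^{h_v}` (with the convention `0^0 = 1`). -/
noncomputable def regret (L n : ℕ) : ℝ :=
  ∑ h ∈ Finset.Nat.antidiagonalTuple L n,
    (Nat.multinomial Finset.univ h : ℝ) * ∏ v, ((h v : ℝ) / (n : ℝ)) ^ (h v)

/-- The Mononen–Myllymäki formula for the multinomial regret: for `L ≥ 1` and
`n ≥ 1`, `R(L, n) = ∑_{k=0}^{n} (n)_k · (L−1)^{(k)} / (n^k · k!)`, with the
falling factorial `(n)_k = n(n−1)⋯(n−k+1)` and the rising factorial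
`(L−1)^{(k)} = (L−1)L⋯(L+k−2)`. -/
theorem regret_eq_mononen_myllymaki (L : ℕ) (hL : 1 ≤ L) (n : ℕ) (hn : 1 ≤ n) :
    regret L n =
      ∑ k ∈ Finset.range (n + 1),
        (Nat.descFactorial n k : ℝ) * (Nat.ascFactorial (L - 1) k : ℝ) /
          ((n : ℝ) ^ k * (Nat.factorial k : ℝ)) := by
  obtain ⟨M, rfl⟩ : ∃ M, L = M + 1 := ⟨L - 1, by omega⟩
  have hM : M + 1 - 1 = M := by omega
  rw [hM]
  have hnR : (n:ℝ) ≠ 0 := by positivity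
  have hreg : regret (M+1) n = T (M+1) n / (n:ℝ)^n := by
    unfold regret T
    rw [Finset.sum_div]
    refine Finset.sum_congr rfl fun h hh => ?_
    rw [Finset.Nat.mem_antidiagonalTuple] at hh
    have hp : ∏ v, ((h v : ℝ) / (n : ℝ)) ^ (h v)
        = (∏ v, ((h v : ℝ))^(h v)) / (n:ℝ)^n := by
      simp_rw [div_pow]
      rw [Finset.prod_div_distrib, Finset.prod_pow_eq_pow_sum, hh]
    rw [hp, mul_div_assoc]
  rw [hreg, T_eq, Finset.sum_div]
  refine Finset.sum_congr rfl fun k hk => ?_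
  rw [Finset.mem_range] at hk
  have hpow : (n:ℝ)^(n-k) * (n:ℝ)^k = (n:ℝ)^n := by
    rw [← pow_add]
    congr 1
    omega
  have hdesc : (n.descFactorial k : ℝ) = (k.factorial:ℝ) * (n.choose k:ℝ) := by
    exact_mod_cast congrArg Nat.cast (Nat.descFactorial_eq_factorial_mul_choose n k)
  rw [hdesc, div_eq_div_iff (by positivity) (by positivity)]
  linear_combination ((n.choose k:ℝ) * (M.ascFactorial k:ℝ) * (k.factorial:ℝ)) * hpow
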